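/- For a single term: if a is odd and α ∈ Z_2^n is a multi-index with α_i = 1, and Q = ∑_{j∈S} x_j is a linear Boolean polynomial not containing x_i, then ord((a/2^b)·x^α [x_i ← ⌈Q⌉]) ≤ ord((a/2^b)·x^α) = b + |α| - 1, using that each summand of the lifting has coefficient a·(±2)^{|S'|-1}/2^b and monomial of degree |α| - 1 + |S'|. -/

import Mathlib

open MvPolynomial

/-- The order of a polynomial over the dyadic rationals: the order of a term
`(a/2^b)·x^α` with `a` odd is `b + |α| - 1`, and the order of a polynomial is the
maximum order over its terms (⊥ for the zero polynomial). -/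
noncomputable def pord {σ : Type*} (P : MvPolynomial σ ℚ) : WithBot ℤ :=
  P.support.sup fun α =>
    ((-(padicValRat 2 (coeff α P)) + (α.sum fun _ e => (e : ℤ)) - 1 : ℤ) : WithBot ℤ)

/-- The lifting `⌈∑_{j∈S} x_j⌉ = ∑_{∅≠S'⊆S} (-2)^(|S'|-1) ∏_{j∈S'} x_j` of a linear
Boolean polynomial to the dyadic rationals. -/
noncomputable def liftLin {σ : Type*} [DecidableEq σ] (S : Finset σ) :
    MvPolynomial σ ℚ :=
  ∑ T ∈ S.powerset.erase ∅, C ((-2 : ℚ) ^ (T.card - 1)) * ∏ j ∈ T, X j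

-- helper lemmas
lemma val2_two : padicValRat 2 (2:ℚ) = 1 := by
  have := padicValRat.self (p := 2) (by norm_num)
  simpa using this

lemma val2_neg_two_pow (k : ℕ) : padicValRat 2 ((-2:ℚ) ^ k) = k := by
  rw [padicValRat.pow _]
  rw [show ((-2:ℚ)) = -(2:ℚ) by ring, padicValRat.neg, val2_two, mul_one]

lemma val2_zpow (n : ℤ) : padicValRat 2 ((2:ℚ) ^ n) = n := by
  obtain ⟨m, rfl | rfl⟩ := n.eq_nat_or_neg
  · rw [zpow_natCast, padicValRat.pow _, val2_two, mul_one]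
  · rw [zpow_neg, padicValRat.inv, zpow_natCast, padicValRat.pow _, val2_two, mul_one]

lemma val2_odd {a : ℤ} (ha : Odd a) : padicValRat 2 (a:ℚ) = 0 := by
  rw [padicValRat.of_int, padicValInt.eq_zero_of_not_dvd]
  · rfl
  · rintro ⟨k, rfl⟩; obtain ⟨m, hm⟩ := ha; omega

lemma ha_ne {a : ℤ} (ha : Odd a) : (a:ℚ) ≠ 0 := by
  obtain ⟨m, hm⟩ := ha; exact_mod_cast (by omega : a ≠ 0)

lemma val2_coeff {a b : ℤ} (ha : Odd a) : padicValRat 2 ((a:ℚ) * 2 ^ (-b)) = -b := by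
  rw [padicValRat.mul (ha_ne ha) (by positivity), val2_odd ha, val2_zpow, zero_add]

lemma val2_coeff' {a b : ℤ} (ha : Odd a) (k : ℕ) :
    padicValRat 2 ((a:ℚ) * 2 ^ (-b) * (-2) ^ k) = -b + k := by
  rw [padicValRat.mul (mul_ne_zero (ha_ne ha) (by positivity)) (by positivity),
    val2_coeff ha, val2_neg_two_pow]

noncomputable def ind {σ : Type*} [DecidableEq σ] (T : Finset σ) : σ →₀ ℕ :=
  ∑ j ∈ T, Finsupp.single j 1

lemma ind_apply {σ : Type*} [DecidableEq σ] (T : Finset σ) (j : σ) :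
    ind T j = if j ∈ T then 1 else 0 := by
  classical
  simp [ind, Finsupp.finset_sum_apply, Finsupp.single_apply]

lemma ind_inj {σ : Type*} [DecidableEq σ] {T T' : Finset σ} (h : ind T = ind T') : T = T' := by
  ext j
  have := DFunLike.congr_fun h j
  simp only [ind_apply] at this
  by_cases hT : j ∈ T <;> by_cases hT' : j ∈ T' <;> simp_all

lemma ind_sum {σ : Type*} [DecidableEq σ] (T : Finset σ) :
    ((ind T).sum fun _ e => (e : ℤ)) = T.card := by
  classical
  induction T using Finset.induction_on with
  | empty => simp [ind]
  | insert _ _ hj ih =>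
    rw [ind, Finset.sum_insert hj, ← ind, Finsupp.sum_add_index' (by simp) (by push_cast; intros; ring),
      Finsupp.sum_single_index (by simp), ih]
    simp [Finset.card_insert_of_notMem hj]
    ring

lemma prod_X_eq {σ : Type*} [DecidableEq σ] (T : Finset σ) :
    (∏ j ∈ T, X j : MvPolynomial σ ℚ) = monomial (ind T) 1 := by
  classical
  induction T using Finset.induction_on with
  | empty => simp [ind]
  | insert _ _ hj ih =>
    rw [Finset.prod_insert hj, ih,
      show ind (insert _ _) = Finsupp.single _ 1 + ind _ from Finset.sum_insert hj,
      show (X _ : MvPolynomial σ ℚ) = monomial (Finsupp.single _ 1) 1 from rfl, monomial_mul, one_mul]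

lemma bind_expand {σ : Type*} [DecidableEq σ] (α : σ →₀ ℕ) (c : ℚ) (i : σ)
    (hαi : α i = 1) (S : Finset σ) :
    bind₁ (fun j => if j = i then liftLin S else X j) (monomial α c)
      = ∑ T ∈ S.powerset.erase ∅,
          monomial (ind T + α.erase i) (c * (-2 : ℚ) ^ (T.card - 1)) := by
  classical
  set f := fun j => if j = i then liftLin S else (X j : MvPolynomial σ ℚ) with hf
  rw [bind₁_monomial]
  have hmain : ∏ j ∈ α.support, f j ^ α j = liftLin S * monomial (α.erase i) 1 := by
    rw [show (∏ j ∈ α.support, f j ^ α j) = α.prod (fun j e => f j ^ e) from rfl,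
      ← Finsupp.mul_prod_erase' α i _ (fun j => pow_zero _)]
    congr 1
    · simp [hf, hαi]
    · rw [monomial_eq, map_one, one_mul]
      apply Finsupp.prod_congr
      intro j hj
      have hji : j ≠ i := by
        intro h
        rw [Finsupp.mem_support_iff, h, Finsupp.erase_same] at hj
        exact hj rfl
      simp [hf, hji]
  rw [hmain, liftLin, Finset.sum_mul, Finset.mul_sum]
  refine Finset.sum_congr rfl fun T hT => ?_
  rw [prod_X_eq, C_apply, C_apply, monomial_mul, monomial_mul, monomial_mul]
  congr 1
  · simp
  · ring

/-- for a single term `(a/2^b)·x^α` with `a` odd and `α_i = 1`,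
substituting the lifting of `Q = ∑_{j∈S} x_j` (with `i ∉ S`) for `x_i` yields a
polynomial of order at most `ord((a/2^b)x^α) = b + |α| - 1`. -/
theorem stmt3 {σ : Type*} [DecidableEq σ] (α : σ →₀ ℕ) (a : ℤ) (b : ℤ)
    (ha : Odd a) (i : σ) (hαi : α i = 1) (hml : ∀ j : σ, α j ≤ 1)
    (S : Finset σ) (hiS : i ∉ S) :
    pord (bind₁ (fun j => if j = i then liftLin S else X j)
        (monomial α ((a : ℚ) * (2 : ℚ) ^ (-b))))
      ≤ ((b + (α.sum fun _ e => (e : ℤ)) - 1 : ℤ) : WithBot ℤ) ∧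
    pord (monomial α ((a : ℚ) * (2 : ℚ) ^ (-b)))
      = ((b + (α.sum fun _ e => (e : ℤ)) - 1 : ℤ) : WithBot ℤ) := by
  classical
  have hc : (a : ℚ) * (2 : ℚ) ^ (-b) ≠ 0 := mul_ne_zero (ha_ne ha) (by positivity)
  set c : ℚ := (a : ℚ) * (2 : ℚ) ^ (-b) with hcdef
  -- sum of erase
  have hsum_erase : ((α.erase i).sum fun _ e => (e : ℤ))
      = (α.sum fun _ e => (e : ℤ)) - 1 := by
    have := Finsupp.add_sum_erase' α i (fun _ e => (e : ℤ)) (by simp)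
    rw [hαi] at this
    norm_num at this
    omega
  constructor
  · rw [bind_expand α c i hαi S]
    set P : MvPolynomial σ ℚ := ∑ T ∈ S.powerset.erase ∅,
      monomial (ind T + α.erase i) (c * (-2 : ℚ) ^ (T.card - 1)) with hPdef
    apply Finset.sup_le
    intro γ hγ
    rw [mem_support_iff] at hγ
    have hco : ∀ δ : σ →₀ ℕ, coeff δ P = ∑ T ∈ S.powerset.erase ∅,
        if ind T + α.erase i = δ then c * (-2 : ℚ) ^ (T.card - 1) else 0 := by
      intro δ
      rw [hPdef, coeff_sum]
      exact Finset.sum_congr rfl fun T _ => coeff_monomial _ _ _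
    rw [hco] at hγ
    obtain ⟨T₀, hT₀, hT₀ne⟩ := Finset.exists_ne_zero_of_sum_ne_zero hγ
    have hT₀eq : ind T₀ + α.erase i = γ := by
      by_contra h
      rw [if_neg h] at hT₀ne
      exact hT₀ne rfl
    have hcoγ : coeff γ P = c * (-2 : ℚ) ^ (T₀.card - 1) := by
      rw [hco]
      rw [Finset.sum_eq_single_of_mem T₀ hT₀ fun T hT hne => if_neg fun h => by
        exact hne (ind_inj (add_right_cancel (h.trans hT₀eq.symm))), if_pos hT₀eq]
    have hval : padicValRat 2 (coeff γ P) = -b + (T₀.card - 1 : ℕ) := by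
      rw [hcoγ, hcdef, val2_coeff' ha]
    have hγsum : (γ.sum fun _ e => (e : ℤ))
        = T₀.card + ((α.sum fun _ e => (e : ℤ)) - 1) := by
      rw [← hT₀eq, Finsupp.sum_add_index' (by simp) (by intros; push_cast; ring),
        ind_sum, hsum_erase]
    have hcard : 1 ≤ T₀.card := by
      rcases Finset.mem_erase.mp hT₀ with ⟨hne, _⟩
      exact Finset.card_pos.mpr (Finset.nonempty_iff_ne_empty.mpr hne)
    rw [hval, hγsum]
    apply WithBot.coe_le_coe.mpr
    push_cast [hcard]
    omega
  · rw [pord, support_monomial, if_neg hc, Finset.sup_singleton, coeff_monomial, if_pos rfl,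
      hcdef, val2_coeff ha]
    congr 1
    ring
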